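/- For all integers n ≥ 1 and d ≥ 1, the following identity holds in the field ℚ(X) of rational functions: [∑_{w∈Sₙ} X^{−ℓ(w)} ∏_{j∈Des(w)} X^{j(n−j+d)}] / ∏_{i=0}^{n−1}(1 − X^{(n−i)(i+d)}) = 1 / ∏_{i=0}^{n−1}(1 − X^{d+i}). -/

import Mathlib

open scoped BigOperators

/-- The values of `w ∈ Sₙ` as a function on `{0,…,n-1}` (0-based), extended by the
identity outside this range. -/
def permVal {n : ℕ} (w : Equiv.Perm (Fin n)) (t : ℕ) : ℕ :=
  if h : t < n then (w ⟨t, h⟩ : ℕ) else t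

/-- `ℓ(w)`, the number of inversions (Coxeter length) of `w ∈ Sₙ`. -/
def lenP {n : ℕ} (w : Equiv.Perm (Fin n)) : ℕ :=
  ((Finset.range n ×ˢ Finset.range n).filter fun p =>
    p.1 < p.2 ∧ permVal w p.2 < permVal w p.1).card

/-- `Des(w) = {i ∈ {1,…,n-1} : w(i+1) < w(i)}`, the descent set of `w ∈ Sₙ`
(in 1-based positions). -/
def desP {n : ℕ} (w : Equiv.Perm (Fin n)) : Finset ℕ :=
  (Finset.Icc 1 (n - 1)).filter fun j => permVal w j < permVal w (j - 1)

open Finset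
open Fin.NatCast

/-- The summand of the Igusa sum. -/
noncomputable def Tm (n d : ℕ) (w : Equiv.Perm (Fin n)) : RatFunc ℚ :=
  ((RatFunc.X : RatFunc ℚ) ^ lenP w)⁻¹ *
    ∏ j ∈ desP w, (RatFunc.X : RatFunc ℚ) ^ (j * (n - j + d))

/- ### basic permVal lemmas -/

lemma permVal_of_lt {n : ℕ} (w : Equiv.Perm (Fin n)) {t : ℕ} (h : t < n) :
    permVal w t = (w ⟨t, h⟩ : ℕ) := dif_pos h

lemma permVal_lt {n : ℕ} (w : Equiv.Perm (Fin n)) {t : ℕ} (h : t < n) :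
    permVal w t < n := by rw [permVal_of_lt w h]; exact (w ⟨t, h⟩).is_lt

lemma permVal_inj {n : ℕ} (w : Equiv.Perm (Fin n)) {t s : ℕ} (ht : t < n) (hs : s < n)
    (h : permVal w t = permVal w s) : t = s := by
  rw [permVal_of_lt w ht, permVal_of_lt w hs] at h
  have h2 : w ⟨t, ht⟩ = w ⟨s, hs⟩ := Fin.ext h
  have := w.injective h2
  simpa [Fin.mk.injEq] using this

lemma permVal_eq_zero_iff {n : ℕ} (u : Equiv.Perm (Fin (n + 1))) {t : ℕ} (h : t < n + 1) :
    permVal u t = 0 ↔ t = ((u⁻¹ 0 : Fin (n + 1)) : ℕ) := by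
  rw [permVal_of_lt u h]
  constructor
  · intro h0
    have : u ⟨t, h⟩ = 0 := by rw [Fin.ext_iff]; exact h0
    have : (⟨t, h⟩ : Fin (n + 1)) = u⁻¹ 0 := by
      rw [← this]; simp
    exact congrArg Fin.val this
  · intro h0
    have : (⟨t, h⟩ : Fin (n + 1)) = u⁻¹ 0 := Fin.ext h0
    rw [this]
    simp

lemma permVal_sub_one {n : ℕ} (u : Equiv.Perm (Fin (n + 1))) {t : ℕ} (h : t < n + 1) :
    permVal (Equiv.subRight (1 : Fin (n + 1)) * u) t
      = if permVal u t = 0 then n else permVal u t - 1 := by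
  rw [permVal_of_lt _ h, permVal_of_lt u h]
  have : (Equiv.subRight (1 : Fin (n + 1)) * u) ⟨t, h⟩ = u ⟨t, h⟩ - 1 := rfl
  rw [this, Fin.coe_sub_one]
  congr 1
  simp only [Fin.ext_iff, Fin.val_zero]

/- ### counting lemmas -/

lemma count_snd {m P : ℕ} (hP : P < m) :
    ∑ x ∈ Finset.range m ×ˢ Finset.range m,
      (if x.1 < x.2 ∧ x.2 = P then 1 else 0) = P := by
  rw [Finset.sum_product]
  have inner : ∀ a : ℕ, (∑ b ∈ Finset.range m, if a < b ∧ b = P then 1 else 0)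
      = if a < P then 1 else 0 := by
    intro a
    have : ∀ b ∈ Finset.range m, (if a < b ∧ b = P then 1 else 0)
        = if b = P then (if a < P then 1 else 0) else 0 := by
      intro b _
      by_cases hb : b = P <;> simp [hb]
    rw [Finset.sum_congr rfl this, Finset.sum_ite_eq' (Finset.range m) P]
    simp [Finset.mem_range.mpr hP]
  rw [Finset.sum_congr rfl (fun a _ => inner a), Finset.sum_boole]
  have : Finset.filter (fun a => a < P) (Finset.range m) = Finset.range P := by
    ext a; simp [Finset.mem_range]; omega
  rw [this, Finset.card_range]
  simp

lemma count_fst {m P : ℕ} (hP : P < m) :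
    ∑ x ∈ Finset.range m ×ˢ Finset.range m,
      (if x.1 < x.2 ∧ x.1 = P then 1 else 0) = m - 1 - P := by
  rw [Finset.sum_product]
  have : ∀ a ∈ Finset.range m, (∑ b ∈ Finset.range m, if a < b ∧ a = P then 1 else 0)
      = if a = P then (m - 1 - P) else 0 := by
    intro a _
    by_cases ha : a = P
    · subst ha
      rw [if_pos rfl]
      simp only [and_true]
      rw [Finset.sum_boole]
      have : Finset.filter (fun b => a < b) (Finset.range m) = Finset.Ico (a + 1) m := by
        ext b; simp [Finset.mem_range, Finset.mem_Ico]; omega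
      rw [this, Nat.card_Ico]
      simp only [Nat.cast_id]
      omega
    · simp [ha]
  rw [Finset.sum_congr rfl this, Finset.sum_ite_eq' (Finset.range m) P]
  simp [Finset.mem_range.mpr hP]

/- ### L1 : change of inversion number under v ↦ v - 1 (mod n+1) -/

lemma L1 {n : ℕ} (u : Equiv.Perm (Fin (n + 1))) :
    lenP (Equiv.subRight (1 : Fin (n + 1)) * u) + ((u⁻¹ 0 : Fin (n + 1)) : ℕ)
      = lenP u + (n - ((u⁻¹ 0 : Fin (n + 1)) : ℕ)) := by
  set P := ((u⁻¹ 0 : Fin (n + 1)) : ℕ) with hPdef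
  have hP : P < n + 1 := Fin.is_lt _
  have csnd := count_snd (m := n + 1) (P := P) hP
  have cfst : (∑ x ∈ Finset.range (n+1) ×ˢ Finset.range (n+1),
      (if x.1 < x.2 ∧ x.1 = P then 1 else 0)) = n - P := by
    rw [count_fst hP]
    omega
  have main : (∑ x ∈ Finset.range (n+1) ×ˢ Finset.range (n+1),
        ((if x.1 < x.2 ∧ permVal (Equiv.subRight (1 : Fin (n+1)) * u) x.2
            < permVal (Equiv.subRight (1 : Fin (n+1)) * u) x.1 then 1 else 0)
          + (if x.1 < x.2 ∧ x.2 = P then 1 else 0)))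
      = (∑ x ∈ Finset.range (n+1) ×ˢ Finset.range (n+1),
        ((if x.1 < x.2 ∧ permVal u x.2 < permVal u x.1 then 1 else 0)
          + (if x.1 < x.2 ∧ x.1 = P then 1 else 0))) := by
    apply Finset.sum_congr rfl
    rintro ⟨a, b⟩ hx
    simp only [Finset.mem_product, Finset.mem_range] at hx
    obtain ⟨ha, hb⟩ := hx
    simp only
    rw [permVal_sub_one u ha, permVal_sub_one u hb]
    have hza := permVal_eq_zero_iff u ha
    have hzb := permVal_eq_zero_iff u hb
    have hla := permVal_lt u ha
    have hlb := permVal_lt u hb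
    rw [← hPdef] at hza hzb
    by_cases hab : a < b
    · have hne : permVal u a ≠ permVal u b := fun h => by
        have := permVal_inj u ha hb h; omega
      set x := permVal u a with hx
      set y := permVal u b with hy
      split_ifs <;> omega
    · simp [hab]
  rw [Finset.sum_add_distrib, Finset.sum_add_distrib, csnd, cfst] at main
  unfold lenP
  rw [Finset.card_filter, Finset.card_filter]
  omega

/- ### L2 : change of descent sum under v ↦ v - 1 (mod n+1) -/

lemma L2 {n d : ℕ} (u : Equiv.Perm (Fin (n + 1)))
    (hP : ((u⁻¹ 0 : Fin (n + 1)) : ℕ) < n) :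
    (∑ j ∈ desP (Equiv.subRight (1 : Fin (n + 1)) * u), j * ((n + 1) - j + d))
        + (if 1 ≤ ((u⁻¹ 0 : Fin (n + 1)) : ℕ)
            then ((u⁻¹ 0 : Fin (n + 1)) : ℕ) * ((n + 1) - ((u⁻¹ 0 : Fin (n + 1)) : ℕ) + d)
            else 0)
      = (∑ j ∈ desP u, j * ((n + 1) - j + d))
        + (((u⁻¹ 0 : Fin (n + 1)) : ℕ) + 1)
            * ((n + 1) - (((u⁻¹ 0 : Fin (n + 1)) : ℕ) + 1) + d) := by
  set P := ((u⁻¹ 0 : Fin (n + 1)) : ℕ) with hPdef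
  unfold desP
  have hIcc : (n + 1) - 1 = n := rfl
  rw [hIcc, Finset.sum_filter, Finset.sum_filter]
  have e1 : (if 1 ≤ P then P * ((n + 1) - P + d) else 0)
      = ∑ j ∈ Finset.Icc 1 n, (if j = P then j * ((n + 1) - j + d) else 0) := by
    rw [Finset.sum_ite_eq' (Finset.Icc 1 n) P]
    by_cases h1 : 1 ≤ P
    · rw [if_pos h1, if_pos (Finset.mem_Icc.mpr ⟨h1, by omega⟩)]
    · rw [if_neg h1, if_neg]
      intro hmem
      exact h1 (Finset.mem_Icc.mp hmem).1
  have e2 : (P + 1) * ((n + 1) - (P + 1) + d)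
      = ∑ j ∈ Finset.Icc 1 n, (if j = P + 1 then j * ((n + 1) - j + d) else 0) := by
    rw [Finset.sum_ite_eq' (Finset.Icc 1 n) (P + 1)]
    rw [if_pos (Finset.mem_Icc.mpr ⟨by omega, by omega⟩)]
  rw [e1, e2, ← Finset.sum_add_distrib, ← Finset.sum_add_distrib]
  apply Finset.sum_congr rfl
  intro j hj
  obtain ⟨hj1, hjn⟩ := Finset.mem_Icc.mp hj
  have hjlt : j < n + 1 := by omega
  have hjlt' : j - 1 < n + 1 := by omega
  rw [permVal_sub_one u hjlt, permVal_sub_one u hjlt']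
  have hz1 := permVal_eq_zero_iff u hjlt
  have hz2 := permVal_eq_zero_iff u hjlt'
  have hl1 := permVal_lt u hjlt
  have hl2 := permVal_lt u hjlt'
  have hne : permVal u j ≠ permVal u (j - 1) := fun h => by
    have := permVal_inj u hjlt hjlt' h; omega
  rw [← hPdef] at hz1 hz2
  set x := permVal u j with hx
  set y := permVal u (j - 1) with hy
  generalize hF : j * ((n + 1) - j + d) = F
  split_ifs <;> omega

lemma powAux (x : RatFunc ℚ) (hx : x ≠ 0) (Sσ S l lσ d : ℕ) (h : Sσ + l = d + S + lσ) :
    (x ^ lσ)⁻¹ * x ^ Sσ = x ^ d * ((x ^ l)⁻¹ * x ^ S) := by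
  rw [inv_mul_eq_div, inv_mul_eq_div, mul_div_assoc' _ _ (x ^ l)]
  rw [div_eq_div_iff (pow_ne_zero _ hx) (pow_ne_zero _ hx)]
  rw [← pow_add, ← pow_add, ← pow_add]
  exact congrArg _ (by omega)

/- ### the one-step lemma -/

lemma step {n d : ℕ} (u : Equiv.Perm (Fin (n + 1)))
    (hP : ((u⁻¹ 0 : Fin (n + 1)) : ℕ) < n) :
    Tm (n + 1) d (Equiv.subRight (1 : Fin (n + 1)) * u)
      = (RatFunc.X : RatFunc ℚ) ^ d * Tm (n + 1) d u := by
  have h1 := L1 u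
  have h2 := L2 (d := d) u hP
  set P := ((u⁻¹ 0 : Fin (n + 1)) : ℕ) with hPdef
  unfold Tm
  rw [Finset.prod_pow_eq_pow_sum, Finset.prod_pow_eq_pow_sum]
  set Sσ := ∑ j ∈ desP (Equiv.subRight (1 : Fin (n + 1)) * u), j * ((n + 1) - j + d) with hSσ
  set S := ∑ j ∈ desP u, j * ((n + 1) - j + d) with hS
  set lσ := lenP (Equiv.subRight (1 : Fin (n + 1)) * u) with hlσ
  set l := lenP u with hl
  have key : Sσ + l = d + S + lσ := by
    obtain ⟨q, hq⟩ : ∃ q, n = P + q + 1 := ⟨n - P - 1, by omega⟩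
    have c1 : (n + 1) - P + d = q + 2 + d := by omega
    have c2 : (n + 1) - (P + 1) + d = q + 1 + d := by omega
    rw [c1, c2] at h2
    rcases Nat.eq_zero_or_pos P with h0 | h0
    · rw [h0, if_neg (by omega)] at h2
      simp only [h0, zero_add, one_mul] at h2
      omega
    · have h0' : 1 ≤ P := h0
      rw [if_pos h0'] at h2
      have expand : (P + 1) * (q + 1 + d) + P = P * (q + 2 + d) + q + 1 + d := by ring
      generalize hA : P * (q + 2 + d) = A at h2 expand
      generalize hB : (P + 1) * (q + 1 + d) = B at h2 expand
      omega
  exact powAux _ RatFunc.X_ne_zero _ _ _ _ _ key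

/- ### extension of a permutation fixing the last point -/

def extP {n : ℕ} (w : Equiv.Perm (Fin n)) : Equiv.Perm (Fin (n + 1)) where
  toFun i := if h : (i : ℕ) < n then ⟨(w ⟨i, h⟩ : ℕ), Nat.lt_succ_of_lt (w ⟨i, h⟩).is_lt⟩
    else ⟨n, Nat.lt_succ_self n⟩
  invFun i := if h : (i : ℕ) < n then ⟨(w⁻¹ ⟨i, h⟩ : ℕ), Nat.lt_succ_of_lt (w⁻¹ ⟨i, h⟩).is_lt⟩
    else ⟨n, Nat.lt_succ_self n⟩
  left_inv i := by
    by_cases h : (i : ℕ) < n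
    · simp only [dif_pos h]
      rw [dif_pos (w ⟨i, h⟩).is_lt]
      apply Fin.ext
      simp
    · simp only [dif_neg h]
      rw [dif_neg (by simp)]
      apply Fin.ext
      have : (i : ℕ) = n := by omega
      simp [this]
  right_inv i := by
    by_cases h : (i : ℕ) < n
    · simp only [dif_pos h]
      rw [dif_pos (w⁻¹ ⟨i, h⟩).is_lt]
      apply Fin.ext
      simp
    · simp only [dif_neg h]
      rw [dif_neg (by simp)]
      apply Fin.ext
      have : (i : ℕ) = n := by omega
      simp [this]

lemma extP_apply_lt {n : ℕ} (w : Equiv.Perm (Fin n)) {t : ℕ} (h : t < n) (h' : t < n + 1) :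
    ((extP w ⟨t, h'⟩ : Fin (n + 1)) : ℕ) = (w ⟨t, h⟩ : ℕ) := by
  simp only [extP, Equiv.coe_fn_mk]
  rw [dif_pos h]

lemma extP_last {n : ℕ} (w : Equiv.Perm (Fin n)) : extP w (Fin.last n) = Fin.last n := by
  simp only [extP, Equiv.coe_fn_mk, Fin.last]
  rw [dif_neg (by simp)]

lemma extP_inv_lt {n : ℕ} (w : Equiv.Perm (Fin n)) {x : Fin (n + 1)} (h : (x : ℕ) < n) :
    (((extP w)⁻¹ x : Fin (n + 1)) : ℕ) < n := by
  by_contra hc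
  have h1 : ((extP w)⁻¹ x : Fin (n + 1)) = Fin.last n := by
    rw [Fin.ext_iff, Fin.val_last]
    have := ((extP w)⁻¹ x).is_lt
    omega
  have := congrArg (extP w) h1
  rw [Equiv.Perm.coe_inv, Equiv.apply_symm_apply, extP_last] at this
  rw [this] at h
  simp at h

lemma permVal_extP_lt {n : ℕ} (w : Equiv.Perm (Fin n)) {t : ℕ} (h : t < n) :
    permVal (extP w) t = permVal w t := by
  rw [permVal_of_lt (extP w) (Nat.lt_succ_of_lt h), permVal_of_lt w h,
    extP_apply_lt w h]

lemma permVal_extP_last {n : ℕ} (w : Equiv.Perm (Fin n)) :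
    permVal (extP w) n = n := by
  rw [permVal_of_lt (extP w) (Nat.lt_succ_self n)]
  have : (⟨n, Nat.lt_succ_self n⟩ : Fin (n + 1)) = Fin.last n := rfl
  rw [this, extP_last]
  rfl

lemma lenP_extP {n : ℕ} (w : Equiv.Perm (Fin n)) : lenP (extP w) = lenP w := by
  unfold lenP
  congr 1
  ext ⟨a, b⟩
  simp only [Finset.mem_filter, Finset.mem_product, Finset.mem_range]
  constructor
  · rintro ⟨⟨ha, hb⟩, hab, hv⟩
    have hbn : b < n := by
      by_contra hbn
      have hbn' : b = n := by omega
      rw [hbn', permVal_extP_last] at hv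
      have han : a < n := by omega
      rw [permVal_extP_lt w han] at hv
      have := permVal_lt w han
      omega
    have han : a < n := lt_trans hab hbn
    rw [permVal_extP_lt w han, permVal_extP_lt w hbn] at hv
    exact ⟨⟨han, hbn⟩, hab, hv⟩
  · rintro ⟨⟨ha, hb⟩, hab, hv⟩
    rw [← permVal_extP_lt w ha, ← permVal_extP_lt w hb] at hv
    exact ⟨⟨by omega, by omega⟩, hab, hv⟩

lemma desP_extP {n : ℕ} (w : Equiv.Perm (Fin n)) : desP (extP w) = desP w := by
  unfold desP
  ext j
  simp only [Finset.mem_filter, Finset.mem_Icc]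
  constructor
  · rintro ⟨⟨hj1, hjn⟩, hd⟩
    have hn1 : (n + 1) - 1 = n := rfl
    rw [hn1] at hjn
    have hjn' : j ≤ n - 1 := by
      by_contra hc
      have hjeq : j = n := by omega
      rw [hjeq, permVal_extP_last, permVal_extP_lt w (by omega : n - 1 < n)] at hd
      have := permVal_lt w (by omega : n - 1 < n)
      omega
    have hjltn : j < n := by omega
    rw [permVal_extP_lt w hjltn, permVal_extP_lt w (by omega : j - 1 < n)] at hd
    exact ⟨⟨hj1, hjn'⟩, hd⟩
  · rintro ⟨⟨hj1, hjn⟩, hd⟩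
    have hn : 1 ≤ n := by omega
    have hjltn : j < n := by omega
    rw [← permVal_extP_lt w hjltn, ← permVal_extP_lt w (by omega : j - 1 < n)] at hd
    refine ⟨⟨hj1, by omega⟩, hd⟩

lemma Tm_extP {n d : ℕ} (w : Equiv.Perm (Fin n)) :
    Tm (n + 1) d (extP w) = Tm n (d + 1) w := by
  unfold Tm
  rw [lenP_extP, desP_extP]
  congr 1
  apply Finset.prod_congr rfl
  intro j hj
  have hj' := (Finset.mem_filter.mp hj).1
  obtain ⟨hj1, hjn⟩ := Finset.mem_Icc.mp hj'
  have : (n + 1) - j + d = n - j + (d + 1) := by omega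
  rw [this]

/- ### telescoping -/

lemma tele {n : ℕ} (d : ℕ) (w : Equiv.Perm (Fin n)) :
    ∀ j, j ≤ n → Tm (n + 1) d (Equiv.subRight ((j : Fin (n + 1))) * extP w)
      = (RatFunc.X : RatFunc ℚ) ^ (j * d) * Tm n (d + 1) w := by
  intro j
  induction j with
  | zero =>
    intro _
    have h0 : Equiv.subRight ((0 : ℕ) : Fin (n + 1)) * extP w = extP w := by
      have hz : ((0 : ℕ) : Fin (n + 1)) = 0 := by simp
      rw [hz]
      ext x
      rw [Equiv.Perm.mul_apply, Equiv.subRight_apply, sub_zero]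
    rw [h0, Tm_extP, zero_mul, pow_zero, one_mul]
  | succ j ih =>
    intro hj
    have hj' : j ≤ n := by omega
    have hcast : (((j + 1 : ℕ)) : Fin (n + 1)) = ((j : ℕ) : Fin (n + 1)) + 1 := by
      push_cast; ring
    have hsplit : Equiv.subRight (((j + 1 : ℕ)) : Fin (n + 1)) * extP w
        = Equiv.subRight (1 : Fin (n + 1))
            * (Equiv.subRight ((j : ℕ) : Fin (n + 1)) * extP w) := by
      ext x
      simp only [Equiv.Perm.mul_apply, Equiv.subRight_apply, hcast]
      rw [sub_sub]
    have hp : (((Equiv.subRight ((j : ℕ) : Fin (n + 1)) * extP w)⁻¹ 0 : Fin (n + 1)) : ℕ) < n := by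
      have hinv : (Equiv.subRight ((j : ℕ) : Fin (n + 1)) * extP w)⁻¹ 0
          = (extP w)⁻¹ (((j : ℕ)) : Fin (n + 1)) := by
        rw [mul_inv_rev, Equiv.Perm.mul_apply]
        congr 1
        simp [Equiv.Perm.inv_def]
      rw [hinv]
      apply extP_inv_lt
      rw [Fin.val_cast_of_lt (by omega : j < n + 1)]
      omega
    rw [hsplit, step _ hp, ih hj', ← mul_assoc, ← pow_add]
    have : d + j * d = (j + 1) * d := by ring
    rw [this]

/- ### the recursion -/

lemma rec1 (n d : ℕ) :
    (∑ w : Equiv.Perm (Fin (n + 1)), Tm (n + 1) d w)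
      = (∑ k ∈ Finset.range (n + 1), (RatFunc.X : RatFunc ℚ) ^ (k * d))
          * ∑ w : Equiv.Perm (Fin n), Tm n (d + 1) w := by
  have hbij : Function.Bijective
      (fun z : Equiv.Perm (Fin n) × Fin (n + 1) => Equiv.subRight z.2 * extP z.1) := by
    rw [Fintype.bijective_iff_injective_and_card]
    constructor
    · rintro ⟨w1, k1⟩ ⟨w2, k2⟩ h
      simp only at h
      have hk : k1 = k2 := by
        have h1 := Equiv.ext_iff.1 h (Fin.last n)
        simp only [Equiv.Perm.mul_apply, Equiv.subRight_apply, extP_last] at h1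
        exact sub_right_inj.mp h1
      subst hk
      have hw : extP w1 = extP w2 := mul_left_cancel h
      have hweq : w1 = w2 := by
        apply Equiv.ext
        intro x
        have h2 := Equiv.ext_iff.1 hw ⟨(x : ℕ), Nat.lt_succ_of_lt x.is_lt⟩
        have e1 := extP_apply_lt w1 x.is_lt (Nat.lt_succ_of_lt x.is_lt)
        have e2 := extP_apply_lt w2 x.is_lt (Nat.lt_succ_of_lt x.is_lt)
        apply Fin.ext
        have : ((extP w1 ⟨(x : ℕ), Nat.lt_succ_of_lt x.is_lt⟩ : Fin (n + 1)) : ℕ)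
            = ((extP w2 ⟨(x : ℕ), Nat.lt_succ_of_lt x.is_lt⟩ : Fin (n + 1)) : ℕ) := by rw [h2]
        rw [e1, e2] at this
        simpa using this
      rw [hweq]
    · simp [Fintype.card_prod, Fintype.card_perm, Fintype.card_fin, Nat.factorial_succ, mul_comm]
  rw [← Function.Bijective.sum_comp hbij (Tm (n + 1) d)]
  rw [Fintype.sum_prod_type]
  have hterm : ∀ w' : Equiv.Perm (Fin n), ∀ k : Fin (n + 1),
      Tm (n + 1) d (Equiv.subRight k * extP w')
        = (RatFunc.X : RatFunc ℚ) ^ ((k : ℕ) * d) * Tm n (d + 1) w' := by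
    intro w' k
    have := tele d w' (k : ℕ) (by omega : (k : ℕ) ≤ n)
    rwa [Fin.cast_val_eq_self] at this
  calc (∑ w' : Equiv.Perm (Fin n), ∑ k : Fin (n + 1), Tm (n + 1) d (Equiv.subRight k * extP w'))
      = ∑ w' : Equiv.Perm (Fin n), ∑ k : Fin (n + 1),
          (RatFunc.X : RatFunc ℚ) ^ ((k : ℕ) * d) * Tm n (d + 1) w' := by
        apply Finset.sum_congr rfl; intro w' _
        apply Finset.sum_congr rfl; intro k _
        exact hterm w' k
    _ = ∑ w' : Equiv.Perm (Fin n),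
          (∑ k : Fin (n + 1), (RatFunc.X : RatFunc ℚ) ^ ((k : ℕ) * d)) * Tm n (d + 1) w' := by
        apply Finset.sum_congr rfl; intro w' _
        rw [Finset.sum_mul]
    _ = (∑ k ∈ Finset.range (n + 1), (RatFunc.X : RatFunc ℚ) ^ (k * d))
          * ∑ w : Equiv.Perm (Fin n), Tm n (d + 1) w := by
        rw [← Finset.mul_sum, Fin.sum_univ_eq_sum_range (fun k => (RatFunc.X : RatFunc ℚ) ^ (k * d))]

/- ### geometric series -/

lemma geomAux (n d : ℕ) :
    (∑ k ∈ Finset.range (n + 1), (RatFunc.X : RatFunc ℚ) ^ (k * d))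
        * (1 - (RatFunc.X : RatFunc ℚ) ^ d)
      = 1 - (RatFunc.X : RatFunc ℚ) ^ ((n + 1) * d) := by
  have h := geom_sum_mul ((RatFunc.X : RatFunc ℚ) ^ d) (n + 1)
  have h1 : ∀ k : ℕ, ((RatFunc.X : RatFunc ℚ) ^ d) ^ k = (RatFunc.X : RatFunc ℚ) ^ (k * d) := by
    intro k; rw [← pow_mul, mul_comm]
  have h2 : (∑ i ∈ Finset.range (n + 1), ((RatFunc.X : RatFunc ℚ) ^ d) ^ i)
      = ∑ k ∈ Finset.range (n + 1), (RatFunc.X : RatFunc ℚ) ^ (k * d) := by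
    apply Finset.sum_congr rfl; intro k _; exact h1 k
  rw [h2, h1 (n + 1)] at h
  linear_combination -h

/- ### the key identity -/

lemma key : ∀ n d : ℕ,
    (∑ w : Equiv.Perm (Fin n), Tm n d w)
        * ∏ i ∈ Finset.range n, (1 - (RatFunc.X : RatFunc ℚ) ^ (d + i))
      = ∏ i ∈ Finset.range n, (1 - (RatFunc.X : RatFunc ℚ) ^ ((n - i) * (i + d))) := by
  intro n
  induction n with
  | zero =>
    intro d
    simp only [Finset.range_zero, Finset.prod_empty, mul_one]
    have h1 : ∀ w : Equiv.Perm (Fin 0), Tm 0 d w = 1 := by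
      intro w
      unfold Tm
      have hl : lenP w = 0 := by simp [lenP]
      have hd : desP w = ∅ := by simp [desP]
      rw [hl, hd]
      simp
    rw [Finset.sum_congr rfl (fun w _ => h1 w), Finset.sum_const]
    simp
  | succ n ih =>
    intro d
    rw [rec1 n d]
    have hsplit1 : (∏ i ∈ Finset.range (n + 1), (1 - (RatFunc.X : RatFunc ℚ) ^ (d + i)))
        = (∏ i ∈ Finset.range n, (1 - (RatFunc.X : RatFunc ℚ) ^ ((d + 1) + i)))
            * (1 - (RatFunc.X : RatFunc ℚ) ^ d) := by
      rw [Finset.prod_range_succ' (fun i => 1 - (RatFunc.X : RatFunc ℚ) ^ (d + i)) n]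
      refine congrArg₂ (· * ·) ?_ (by norm_num)
      apply Finset.prod_congr rfl; intro i _
      have : d + (i + 1) = (d + 1) + i := by omega
      rw [this]
    have hsplit2 : (∏ i ∈ Finset.range (n + 1),
          (1 - (RatFunc.X : RatFunc ℚ) ^ (((n + 1) - i) * (i + d))))
        = (∏ i ∈ Finset.range n, (1 - (RatFunc.X : RatFunc ℚ) ^ ((n - i) * (i + (d + 1)))))
            * (1 - (RatFunc.X : RatFunc ℚ) ^ ((n + 1) * d)) := by
      rw [Finset.prod_range_succ'
        (fun i => 1 - (RatFunc.X : RatFunc ℚ) ^ (((n + 1) - i) * (i + d))) n]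
      refine congrArg₂ (· * ·) ?_ (by rw [show ((n + 1) - 0) * (0 + d) = (n + 1) * d by simp])
      apply Finset.prod_congr rfl; intro i hi
      have hi' := Finset.mem_range.mp hi
      have : ((n + 1) - (i + 1)) * ((i + 1) + d) = (n - i) * (i + (d + 1)) := by
        have e1 : (n + 1) - (i + 1) = n - i := by omega
        have e2 : (i + 1) + d = i + (d + 1) := by omega
        rw [e1, e2]
      rw [this]
    rw [hsplit1, hsplit2, ← ih (d + 1), ← geomAux n d]
    ring

lemma one_sub_X_pow_ne_zero {e : ℕ} (he : 1 ≤ e) :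
    (1 : RatFunc ℚ) - (RatFunc.X : RatFunc ℚ) ^ e ≠ 0 := by
  intro h
  have hx1 : (RatFunc.X : RatFunc ℚ) ^ e = 1 := (sub_eq_zero.mp h).symm
  have hinj : Function.Injective (algebraMap (Polynomial ℚ) (RatFunc ℚ)) :=
    IsFractionRing.injective _ _
  have hpoly : (Polynomial.X : Polynomial ℚ) ^ e = 1 := by
    apply hinj
    rw [map_pow, map_one, RatFunc.algebraMap_X]
    exact hx1
  have := congrArg Polynomial.natDegree hpoly
  rw [Polynomial.natDegree_X_pow, Polynomial.natDegree_one] at this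
  omega

theorem stmt13 (n d : ℕ) (hn : 1 ≤ n) (hd : 1 ≤ d) :
    (∑ w : Equiv.Perm (Fin n),
        ((RatFunc.X : RatFunc ℚ) ^ lenP w)⁻¹ *
          ∏ j ∈ desP w, (RatFunc.X : RatFunc ℚ) ^ (j * (n - j + d))) /
      (∏ i ∈ Finset.range n, (1 - (RatFunc.X : RatFunc ℚ) ^ ((n - i) * (i + d)))) =
    1 / ∏ i ∈ Finset.range n, (1 - (RatFunc.X : RatFunc ℚ) ^ (d + i)) := by
  have hkey := key n d
  have hD1 : (∏ i ∈ Finset.range n, (1 - (RatFunc.X : RatFunc ℚ) ^ ((n - i) * (i + d)))) ≠ 0 := by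
    apply Finset.prod_ne_zero_iff.mpr
    intro i hi
    have hi' := Finset.mem_range.mp hi
    exact one_sub_X_pow_ne_zero (Nat.mul_pos (by omega) (by omega))
  have hD2 : (∏ i ∈ Finset.range n, (1 - (RatFunc.X : RatFunc ℚ) ^ (d + i))) ≠ 0 := by
    apply Finset.prod_ne_zero_iff.mpr
    intro i hi
    exact one_sub_X_pow_ne_zero (by omega)
  rw [div_eq_div_iff hD1 hD2, one_mul]
  unfold Tm at hkey
  exact hkey
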